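/- Let V be a finite set, L a set of colors, 0 and γ two distinct elements not in L, φ : V × V → L ∪ {0, γ} a symmetric input function with φ(u,v) = 0 iff u = v, and Φ a chromatic clustering of V represented as a symmetric binary function. Fix β = 1/10. For u ∈ V let C_u denote the cluster of Φ containing u; call a vertex u bad if d_0(φ_u, Φ_u) > (β/2)·|C_u|, and call a cluster C of Φ bad if |{u ∈ C : u is bad}| ≥ (β/3)·|C|. Define Φᵖ by Φᵖ(u,v) = γ for u ≠ v whenever u or v is bad or lies in a bad cluster, and Φᵖ(u,v) = Φ(u,v) otherwise. Then for every cluster K of Φᵖ with |K| ≥ 2 and every u ∈ K, d_0(φ_u, Φᵖ_u) < β·|K|. -/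
import Mathlib


open scoped Classical

/-- preclustering with `β = 1/10`. The codomain `L ∪ {0, γ}` is modeled by
`Option (Option L)` with `none = 0` and `some none = γ`; `Φ` is a chromatic clustering
given as a symmetric binary function, `C u` is the cluster of `Φ` containing `u`,
`bad u` means `d_0(φ_u, Φ_u) > (β/2)·|C u|`, `badC u` means the cluster of `u` contains
at least a `β/3` fraction of bad vertices, and `Φᵖ` sets all pairs touching a bad vertex
or a vertex of a bad cluster to `γ`. Then every cluster `K` of `Φᵖ` with `|K| ≥ 2`
satisfies `d_0(φ_u, Φᵖ_u) < β·|K|` for each `u ∈ K`. -/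
theorem atom_local_cost_bound {V L : Type*} [Fintype V]
    (φ Φ : V → V → Option (Option L))
    (hφsymm : ∀ u v : V, φ u v = φ v u)
    (hφdiag : ∀ u v : V, φ u v = none ↔ u = v)
    (hΦsymm : ∀ u v : V, Φ u v = Φ v u)
    (hΦdiag : ∀ u v : V, Φ u v = none ↔ u = v)
    (hΦclust : ∀ (u v : V) (c : L), Φ u v = some (some c) →
      ∀ w : V, w ≠ u → w ≠ v →
        Φ u w = Φ v w ∧ (Φ u w = some (some c) ∨ Φ u w = some none))
    (β : ℝ) (hβ : β = 1 / 10)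
    (C : V → Finset V)
    (hC : ∀ u : V, C u = Finset.univ.filter fun v : V => Φ u v ≠ some none)
    (bad : V → Prop)
    (hbad : ∀ u : V, bad u ↔
      ((Finset.univ.filter fun v : V => φ u v ≠ Φ u v).card : ℝ) > β / 2 * (C u).card)
    (badC : V → Prop)
    (hbadC : ∀ u : V, badC u ↔
      ((((C u).filter fun w : V => bad w).card : ℝ) ≥ β / 3 * (C u).card))
    (Φp : V → V → Option (Option L))
    (hΦp : ∀ u v : V, Φp u v =
      if u = v then none
      else if bad u ∨ badC u ∨ bad v ∨ badC v then some none
      else Φ u v) :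
    ∀ u : V,
      2 ≤ (Finset.univ.filter fun v : V => Φp u v ≠ some none).card →
      ((Finset.univ.filter fun v : V => φ u v ≠ Φp u v).card : ℝ) <
        β * (Finset.univ.filter fun v : V => Φp u v ≠ some none).card := by
  intro u hK
  classical
  set K := Finset.univ.filter fun v : V => Φp u v ≠ some none with hKdef
  have huK : u ∈ K := by
    have : Φp u u = none := by rw [hΦp]; simp
    simp [hKdef, this]
  obtain ⟨v, hvK, hvu⟩ := Finset.exists_mem_ne (by omega : 1 < K.card) u
  have hvu' : u ≠ v := fun h => hvu h.symm
  have hgood : ¬(bad u ∨ badC u ∨ bad v ∨ badC v) := by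
    intro h
    have h2 := hΦp u v
    rw [if_neg hvu', if_pos h] at h2
    exact (Finset.mem_filter.1 hvK).2 h2
  push_neg at hgood
  obtain ⟨hbu, hbCu, -, -⟩ := hgood
  have hCmem : ∀ w, w ∈ C u ↔ Φ u w ≠ some none := by
    intro w; rw [hC]; simp
  have huCu : u ∈ C u := (hCmem u).2 (by simp [(hΦdiag u u).2 rfl])
  have hsome : ∀ w ∈ C u, w ≠ u → ∃ c, Φ u w = some (some c) := by
    intro w hw hwu
    cases h : Φ u w with
    | none => exact absurd ((hΦdiag u w).1 h).symm hwu
    | some o => cases o with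
      | none => exact absurd h ((hCmem w).1 hw)
      | some c => exact ⟨c, rfl⟩
  have hCeq : ∀ w ∈ C u, w ≠ u → C w = C u := by
    intro w hw hwu
    obtain ⟨c, hc⟩ := hsome w hw hwu
    have hwu' : Φ w u = some (some c) := by rw [hΦsymm w u, hc]
    rw [hC w, hC u]
    ext x
    simp only [Finset.mem_filter, Finset.mem_univ, true_and]
    rcases eq_or_ne x u with rfl | hxu
    · simp [hwu', (hΦdiag x x).2 rfl]
    · rcases eq_or_ne x w with rfl | hxw
      · simp [(hΦdiag x x).2 rfl, hc]
      · have := (hΦclust u w c hc x hxu hxw).1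
        rw [this]
  have hbadCw : ∀ w ∈ C u, ¬ badC w := by
    intro w hw
    rcases eq_or_ne w u with rfl | hwu
    · exact hbCu
    · rw [hbadC w, hCeq w hw hwu, ← hbadC u]
      exact hbCu
  set M := Finset.univ.filter fun w : V => φ u w ≠ Φ u w with hM
  set B := (C u).filter fun w : V => bad w with hB
  set Mp := Finset.univ.filter fun w : V => φ u w ≠ Φp u w with hMp
  have hsub : Mp ⊆ M ∪ B := by
    intro w hw
    have hw' : φ u w ≠ Φp u w := (Finset.mem_filter.1 hw).2
    rcases eq_or_ne w u with rfl | hwu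
    · exfalso
      apply hw'
      rw [hΦp, if_pos rfl, (hφdiag w w).2 rfl]
    · by_cases hcond : bad u ∨ badC u ∨ bad w ∨ badC w
      · have hpw : Φp u w = some none := by rw [hΦp, if_neg (Ne.symm hwu), if_pos hcond]
        by_cases hwC : w ∈ C u
        · have hbw : bad w := by
            rcases hcond with h | h | h | h
            · exact absurd h hbu
            · exact absurd h hbCu
            · exact h
            · exact absurd h (hbadCw w hwC)
          exact Finset.mem_union_right _ (Finset.mem_filter.2 ⟨hwC, hbw⟩)
        · have hΦw : Φ u w = some none := by
            by_contra h
            exact hwC ((hCmem w).2 h)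
          refine Finset.mem_union_left _ (Finset.mem_filter.2 ⟨Finset.mem_univ _, ?_⟩)
          rw [hΦw, ← hpw]
          exact hw'
      · have hpw : Φp u w = Φ u w := by rw [hΦp, if_neg (Ne.symm hwu), if_neg hcond]
        refine Finset.mem_union_left _ (Finset.mem_filter.2 ⟨Finset.mem_univ _, ?_⟩)
        rw [← hpw]; exact hw'
  have hKsup : ((C u).filter fun w : V => ¬ bad w) ⊆ K := by
    intro w hw
    obtain ⟨hwC, hwb⟩ := Finset.mem_filter.1 hw
    refine Finset.mem_filter.2 ⟨Finset.mem_univ _, ?_⟩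
    rcases eq_or_ne w u with rfl | hwu
    · rw [hΦp, if_pos rfl]; simp
    · have hcond : ¬(bad u ∨ badC u ∨ bad w ∨ badC w) := by
        push_neg
        exact ⟨hbu, hbCu, hwb, hbadCw w hwC⟩
      rw [hΦp, if_neg (Ne.symm hwu), if_neg hcond]
      exact (hCmem w).1 hwC
  have h1 : Mp.card ≤ M.card + B.card :=
    le_trans (Finset.card_le_card hsub) (Finset.card_union_le _ _)
  have h2 : (M.card : ℝ) ≤ β / 2 * (C u).card := by
    exact not_lt.mp fun h => hbu ((hbad u).2 h)
  have h3 : (B.card : ℝ) < β / 3 * (C u).card := by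
    exact not_le.mp fun h => hbCu ((hbadC u).2 h)
  have h4 : (C u).card ≤ B.card + K.card := by
    have := Finset.card_filter_add_card_filter_not (s := C u)
      (p := fun w : V => bad w)
    calc (C u).card = B.card + ((C u).filter fun w : V => ¬ bad w).card := this.symm
      _ ≤ B.card + K.card := by
          exact Nat.add_le_add_left (Finset.card_le_card hKsup) _
  have h1' : (Mp.card : ℝ) ≤ (M.card : ℝ) + (B.card : ℝ) := by exact_mod_cast h1
  have h4' : ((C u).card : ℝ) ≤ (B.card : ℝ) + (K.card : ℝ) := by exact_mod_cast h4
  have hb0 : (0 : ℝ) ≤ (B.card : ℝ) := Nat.cast_nonneg _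
  subst hβ
  linarith
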